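/- Let p be a prime and f a polynomial with coefficients in ℤ_p. Then the following are equivalent: (i) f(n) ≡ n (mod p) for every n ∈ ℤ_p, and the map induced by f on ℤ/p²ℤ is injective (i.e., for all m, n ∈ ℤ_p: f(m) ≡ f(n) (mod p²) implies m ≡ n (mod p²)); (ii) the evaluation map n ↦ f(n) is a bijection of ℤ_p, f(n) ≡ n (mod p) for every n ∈ ℤ_p, and for every k ∈ ℕ and all m, n ∈ ℤ_p: m ≡ n (mod p^k) if and only if f(m) ≡ f(n) (mod p^k). In other words, f is a p-permutation polynomial if and only if its evaluation defines a p-adic permutation, and this can be tested on the two levels ℤ/pℤ and ℤ/p²ℤ alone. -/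

import Mathlib

private lemma pdvd_iff_norm {p : ℕ} [Fact p.Prime] (x : ℤ_[p]) (k : ℕ) :
    (p : ℤ_[p]) ^ k ∣ x ↔ ‖x‖ ≤ (p : ℝ) ^ (-(k : ℤ)) := by
  rw [PadicInt.norm_le_pow_iff_mem_span_pow, Ideal.mem_span_singleton]

private lemma eq_zero_of_dvd_all {p : ℕ} [Fact p.Prime] (x : ℤ_[p])
    (h : ∀ k : ℕ, (p : ℤ_[p]) ^ k ∣ x) : x = 0 := by
  by_contra hx
  have hk := fun k => (PadicInt.norm_le_pow_iff_le_valuation x hx k).mp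
    ((pdvd_iff_norm x k).mp (h k))
  have h1 := hk (x.valuation + 1)
  omega

private lemma deriv_unit {p : ℕ} [Fact p.Prime] (f : Polynomial ℤ_[p])
    (h2 : ∀ m n : ℤ_[p],
      (p : ℤ_[p]) ^ 2 ∣ f.eval m - f.eval n → (p : ℤ_[p]) ^ 2 ∣ m - n)
    (n : ℤ_[p]) : IsUnit (f.derivative.eval n) := by
  by_contra hu
  have hd : (p : ℤ_[p]) ∣ f.derivative.eval n :=
    (PadicInt.norm_lt_one_iff_dvd _).mp (PadicInt.not_isUnit_iff.mp hu)
  obtain ⟨c, hc⟩ := f.binomExpansion n (p : ℤ_[p])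
  have hdvd : (p : ℤ_[p]) ^ 2 ∣ f.eval (n + p) - f.eval n := by
    rw [hc]
    ring_nf
    obtain ⟨d, hd⟩ := hd
    rw [hd]
    ring_nf
    exact ⟨d + c, by ring⟩
  have := h2 (n + p) n hdvd
  simp only [add_sub_cancel_left] at this
  have hp : (p : ℤ_[p]) ≠ 0 := by
    exact_mod_cast (Nat.cast_ne_zero (R := ℤ_[p])).mpr (Fact.out (p := p.Prime)).ne_zero
  obtain ⟨e, he⟩ := this
  have : (p : ℤ_[p]) * 1 = p * (p * e) := by rw [mul_one]; rw [pow_two] at he; linear_combination he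
  have h1 : (1 : ℤ_[p]) = p * e := mul_left_cancel₀ hp this
  exact PadicInt.prime_p.not_isUnit (IsUnit.of_mul_eq_one e h1.symm)

private lemma key_lemma {p : ℕ} [Fact p.Prime] (f : Polynomial ℤ_[p])
    (h1 : ∀ n : ℤ_[p], (p : ℤ_[p]) ∣ f.eval n - n)
    (hdu : ∀ n : ℤ_[p], IsUnit (f.derivative.eval n)) :
    ∀ k : ℕ, ∀ m n : ℤ_[p],
      (p : ℤ_[p]) ^ k ∣ m - n ↔ (p : ℤ_[p]) ^ k ∣ f.eval m - f.eval n := by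
  have hp : (p : ℤ_[p]) ≠ 0 := by
    exact_mod_cast (Nat.cast_ne_zero (R := ℤ_[p])).mpr (Fact.out (p := p.Prime)).ne_zero
  intro k
  induction k with
  | zero => simp
  | succ k ih =>
    intro m n
    constructor
    · intro h
      exact dvd_trans h (Polynomial.sub_dvd_eval_sub m n f)
    · intro h
      match k, ih with
      | 0, _ =>
        rw [pow_one] at h ⊢
        have : m - n = -(f.eval m - m) + (f.eval m - f.eval n) + (f.eval n - n) := by ring
        rw [this]
        exact dvd_add (dvd_add ((h1 m).neg_right) h) (h1 n)
      | k + 1, ih =>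
        have hk : (p : ℤ_[p]) ^ (k + 1) ∣ m - n :=
          (ih m n).mpr (dvd_trans (pow_dvd_pow _ (Nat.le_succ _)) h)
        obtain ⟨t, ht⟩ := hk
        have hm : m = n + (p : ℤ_[p]) ^ (k + 1) * t := by linear_combination ht
        obtain ⟨c, hc⟩ := f.binomExpansion n ((p : ℤ_[p]) ^ (k + 1) * t)
        rw [hm, hc] at h
        have h' : (p : ℤ_[p]) ^ (k + 2) ∣
            f.derivative.eval n * ((p : ℤ_[p]) ^ (k + 1) * t) := by
          have hsq : (p : ℤ_[p]) ^ (k + 2) ∣ c * ((p : ℤ_[p]) ^ (k + 1) * t) ^ 2 := by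
            refine Dvd.dvd.mul_left ?_ c
            rw [mul_pow, ← pow_mul]
            exact Dvd.dvd.mul_right (pow_dvd_pow _ (by omega)) _
          have heq : f.derivative.eval n * ((p : ℤ_[p]) ^ (k + 1) * t) =
              (f.eval n + f.derivative.eval n * ((p : ℤ_[p]) ^ (k + 1) * t) +
               c * ((p : ℤ_[p]) ^ (k + 1) * t) ^ 2 - f.eval n)
              - c * ((p : ℤ_[p]) ^ (k + 1) * t) ^ 2 := by ring
          rw [heq]
          exact dvd_sub h hsq
        have h'' : (p : ℤ_[p]) ∣ f.derivative.eval n * t := by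
          have hpk : (p : ℤ_[p]) ^ (k + 1) ≠ 0 := pow_ne_zero _ hp
          obtain ⟨e, he⟩ := h'
          refine ⟨e, mul_left_cancel₀ hpk ?_⟩
          have : (p : ℤ_[p]) ^ (k + 2) = (p : ℤ_[p]) ^ (k + 1) * p := by ring
          rw [this] at he
          linear_combination he
        have hpt : (p : ℤ_[p]) ∣ t := (hdu n).dvd_mul_left.mp h''
        obtain ⟨s, hs⟩ := hpt
        exact ⟨s, by rw [ht, hs]; ring⟩

private lemma surj_lemma {p : ℕ} [Fact p.Prime] (f : Polynomial ℤ_[p])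
    (h1 : ∀ n : ℤ_[p], (p : ℤ_[p]) ∣ f.eval n - n)
    (hdu : ∀ n : ℤ_[p], IsUnit (f.derivative.eval n)) :
    Function.Surjective (fun n : ℤ_[p] => f.eval n) := by
  intro y
  set F : Polynomial ℤ_[p] := f - Polynomial.C y with hF
  have hFe : ∀ z, F.eval z = f.eval z - y := by intro z; simp [hF]
  have hFd : F.derivative = f.derivative := by simp [hF]
  have hnorm : ‖F.eval y‖ < ‖F.derivative.eval y‖ ^ 2 := by
    rw [hFe, hFd, PadicInt.isUnit_iff.mp (hdu y), one_pow]
    exact (PadicInt.norm_lt_one_iff_dvd _).mpr (h1 y)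
  obtain ⟨z, hz, -⟩ := hensels_lemma hnorm
  exact ⟨z, by have := hFe z; rw [Polynomial.coe_aeval_eq_eval] at hz; rw [hz] at this; linear_combination -this⟩

/-- **Characterization of `p`-permutation polynomials** (`LCharacPermPoly` +
`TCharacPermPoly`). For a polynomial `f ∈ ℤ_p[x]` the following are equivalent:
(i) `f(n) ≡ n (mod p)` for all `n`, and the map induced by `f` on `ℤ/p²ℤ` is
injective (`f(m) ≡ f(n) (mod p²) → m ≡ n (mod p²)`);
(ii) evaluation of `f` is a bijection of `ℤ_p`, `f(n) ≡ n (mod p)` for all `n`, and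
for every `k` and all `m, n`: `m ≡ n (mod p^k) ↔ f(m) ≡ f(n) (mod p^k)`.
That is, `f` is a `p`-permutation polynomial iff its evaluation is a `p`-adic
permutation, and this can be tested on `ℤ/pℤ` and `ℤ/p²ℤ` alone. -/
theorem stmt19 (p : ℕ) [Fact p.Prime] (f : Polynomial ℤ_[p]) :
    ((∀ n : ℤ_[p], (p : ℤ_[p]) ∣ f.eval n - n) ∧
      (∀ m n : ℤ_[p],
        (p : ℤ_[p]) ^ 2 ∣ f.eval m - f.eval n → (p : ℤ_[p]) ^ 2 ∣ m - n)) ↔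
    (Function.Bijective (fun n : ℤ_[p] => f.eval n) ∧
      (∀ n : ℤ_[p], (p : ℤ_[p]) ∣ f.eval n - n) ∧
      (∀ k : ℕ, ∀ m n : ℤ_[p],
        (p : ℤ_[p]) ^ k ∣ m - n ↔ (p : ℤ_[p]) ^ k ∣ f.eval m - f.eval n)) := by
  constructor
  · rintro ⟨h1, h2⟩
    have hdu := deriv_unit f h2
    have key := key_lemma f h1 hdu
    refine ⟨⟨?_, surj_lemma f h1 hdu⟩, h1, key⟩
    intro m n hmn
    simp only at hmn
    have : m - n = 0 := by
      apply eq_zero_of_dvd_all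
      intro k
      exact (key k m n).mpr (by rw [hmn]; simp)
    linear_combination this
  · rintro ⟨-, h1, key⟩
    exact ⟨h1, fun m n h => (key 2 m n).mpr h⟩
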